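/- The trace-preserving normalization does not change the order of the scheme: there exists an absolute constant C > 0 such that for every d ≥ 1, every 0 < ε ≤ 1/2, and all d×d complex matrices M_0,…,M_m with ‖S − I‖ ≤ ε where S = Σⱼ MⱼᴴMⱼ (so S is positive definite), setting M̃ⱼ = Mⱼ·S^{−1/2} (with S^{−1/2} the inverse of the positive definite square root of S), one has for every d×d matrix ρ: ‖Σⱼ M̃ⱼ ρ M̃ⱼᴴ − Σⱼ Mⱼ ρ Mⱼᴴ‖₁ ≤ C·ε·‖ρ‖₁. -/

import Mathlib

open Matrix
open scoped ComplexOrder Matrix.Norms.L2Operator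

/-- The positive semidefinite square root of a matrix (defined to be `0` if the matrix is not
positive semidefinite). -/
noncomputable def matSqrt {d : ℕ} (A : Matrix (Fin d) (Fin d) ℂ) : Matrix (Fin d) (Fin d) ℂ :=
  open scoped Classical in
  if h : A.PosSemidef then
    (h.1.eigenvectorUnitary : Matrix (Fin d) (Fin d) ℂ) *
      diagonal (((↑) : ℝ → ℂ) ∘ Real.sqrt ∘ h.1.eigenvalues) *
      star (h.1.eigenvectorUnitary : Matrix (Fin d) (Fin d) ℂ)
  else 0

/-- The trace norm `‖A‖₁ = Re (Tr √(AᴴA))` of a complex matrix. -/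
noncomputable def traceNorm {d : ℕ} (A : Matrix (Fin d) (Fin d) ℂ) : ℝ :=
  (Matrix.trace (matSqrt (Aᴴ * A))).re

/-- The operator norm of a matrix induced by the Euclidean (ℓ²) norm on `ℂ^d`. -/
noncomputable def opNorm {d : ℕ} (A : Matrix (Fin d) (Fin d) ℂ) : ℝ :=
  ‖Matrix.toEuclideanCLM (𝕜 := ℂ) A‖

lemma norm_one_le {d : ℕ} : ‖(1 : Matrix (Fin d) (Fin d) ℂ)‖ ≤ 1 := by
  rw [Matrix.cstar_norm_def, _root_.map_one]
  exact ContinuousLinearMap.norm_id_le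

lemma norm_unitary {d : ℕ} (V : Matrix.unitaryGroup (Fin d) ℂ) :
    ‖(V : Matrix (Fin d) (Fin d) ℂ)‖ ≤ 1 := by
  have h2 := CStarRing.norm_star_mul_self (x := (V : Matrix (Fin d) (Fin d) ℂ))
  rw [Unitary.coe_star_mul_self] at h2
  nlinarith [norm_nonneg (V : Matrix (Fin d) (Fin d) ℂ), norm_one_le (d := d)]

lemma euclid_norm_sq {d : ℕ} (x : EuclideanSpace ℂ (Fin d)) : ‖x‖^2 = ∑ i, ‖x i‖^2 := by
  rw [EuclideanSpace.norm_eq, Real.sq_sqrt]; positivity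

lemma norm_diagonal_le {d : ℕ} (g : Fin d → ℂ) (c : ℝ) (hc : 0 ≤ c) (h : ∀ i, ‖g i‖ ≤ c) :
    ‖(Matrix.diagonal g : Matrix (Fin d) (Fin d) ℂ)‖ ≤ c := by
  rw [Matrix.cstar_norm_def]
  apply ContinuousLinearMap.opNorm_le_bound _ hc
  intro x
  have hx : (toEuclideanCLM (𝕜 := ℂ) (Matrix.diagonal g) x) =
      (WithLp.equiv 2 _).symm (Matrix.diagonal g *ᵥ (WithLp.equiv 2 _ x)) := rfl
  rw [hx, EuclideanSpace.norm_eq]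
  have hcx : c * ‖x‖ = Real.sqrt ((c*‖x‖)^2) := by rw [Real.sqrt_sq (by positivity)]
  rw [hcx]
  apply Real.sqrt_le_sqrt
  calc ∑ i, ‖((WithLp.equiv 2 _).symm (Matrix.diagonal g *ᵥ (WithLp.equiv 2 _ x)) : EuclideanSpace ℂ (Fin d)) i‖^2
      = ∑ i, ‖g i * x i‖^2 := by
        refine Finset.sum_congr rfl fun i _ => ?_
        congr 1
        simp [Matrix.mulVec_diagonal, WithLp.equiv, Equiv.refl]
    _ ≤ ∑ i, c^2 * ‖x i‖^2 := by
        refine Finset.sum_le_sum fun i _ => ?_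
        rw [norm_mul, mul_pow]
        have := h i
        have : ‖g i‖^2 ≤ c^2 := by nlinarith [norm_nonneg (g i)]
        nlinarith [norm_nonneg (x i), sq_nonneg (‖x i‖)]
    _ = (c * ‖x‖)^2 := by rw [← Finset.mul_sum, ← euclid_norm_sq]; ring

lemma eig_near {d : ℕ} {S : Matrix (Fin d) (Fin d) ℂ} (hS : S.IsHermitian) {ε : ℝ}
    (h : ‖S - 1‖ ≤ ε) (i : Fin d) : |hS.eigenvalues i - 1| ≤ ε := by
  set v : EuclideanSpace ℂ (Fin d) := hS.eigenvectorBasis i with hv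
  have hnv : ‖v‖ = 1 := hS.eigenvectorBasis.orthonormal.1 i
  have key : (S - 1) *ᵥ ⇑v = (hS.eigenvalues i - 1 : ℝ) • ⇑v := by
    rw [Matrix.sub_mulVec, Matrix.one_mulVec, hS.mulVec_eigenvectorBasis]
    ext j
    simp [sub_smul, hv]
  have hb : ‖((EuclideanSpace.equiv (Fin d) ℂ).symm ((S - 1) *ᵥ ⇑v) : EuclideanSpace ℂ (Fin d))‖
      ≤ ‖S - 1‖ * ‖v‖ := Matrix.l2_opNorm_mulVec (S - 1) v
  rw [key] at hb
  have : ‖((EuclideanSpace.equiv (Fin d) ℂ).symm ((hS.eigenvalues i - 1 : ℝ) • ⇑v) : EuclideanSpace ℂ (Fin d))‖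
      = |hS.eigenvalues i - 1| := by
    have : ((EuclideanSpace.equiv (Fin d) ℂ).symm ((hS.eigenvalues i - 1 : ℝ) • ⇑v) : EuclideanSpace ℂ (Fin d))
        = (hS.eigenvalues i - 1 : ℝ) • v := rfl
    rw [this, norm_smul, hnv, Real.norm_eq_abs, mul_one]
  rw [this, hnv, mul_one] at hb
  exact hb.trans h

section TN
variable {d : ℕ} (A : Matrix (Fin d) (Fin d) ℂ)

lemma hH (A : Matrix (Fin d) (Fin d) ℂ) : (Aᴴ * A).PosSemidef :=
  Matrix.posSemidef_conjTranspose_mul_self A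

lemma matSqrt_eq {S : Matrix (Fin d) (Fin d) ℂ} (hS : S.PosSemidef) :
    matSqrt S = (hS.1.eigenvectorUnitary : Matrix (Fin d) (Fin d) ℂ) *
      diagonal (((↑) : ℝ → ℂ) ∘ Real.sqrt ∘ hS.1.eigenvalues) *
      star (hS.1.eigenvectorUnitary : Matrix (Fin d) (Fin d) ℂ) := dif_pos hS

lemma traceNorm_eq : traceNorm A = ∑ i, Real.sqrt ((hH A).1.eigenvalues i) := by
  rw [traceNorm, matSqrt_eq (hH A)]
  rw [Matrix.trace_mul_cycle]
  rw [mul_assoc, ← mul_assoc, Unitary.coe_star_mul_self, one_mul, Matrix.trace_diagonal]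
  simp

lemma traceNorm_nonneg : 0 ≤ traceNorm A := by
  rw [traceNorm_eq]
  exact Finset.sum_nonneg fun i _ => Real.sqrt_nonneg _

section dual
variable {d : ℕ} (A X : Matrix (Fin d) (Fin d) ℂ)

private noncomputable def Vu (A : Matrix (Fin d) (Fin d) ℂ) := (hH A).1.eigenvectorUnitary
private noncomputable def Bm (A : Matrix (Fin d) (Fin d) ℂ) := A * (Vu A : Matrix (Fin d) (Fin d) ℂ)
private noncomputable def mu (A : Matrix (Fin d) (Fin d) ℂ) := (hH A).1.eigenvalues

lemma Bm_conj_mul : (Bm A)ᴴ * Bm A = Matrix.diagonal (RCLike.ofReal ∘ mu A) := by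
  rw [Bm, Matrix.conjTranspose_mul]
  have := (hH A).1.conjStarAlgAut_star_eigenvectorUnitary
  rw [Unitary.conjStarAlgAut_star_apply] at this
  rw [← Matrix.star_eq_conjTranspose]
  calc star (Vu A : Matrix (Fin d) (Fin d) ℂ) * Aᴴ * (A * (Vu A : Matrix (Fin d) (Fin d) ℂ))
      = star (Vu A : Matrix (Fin d) (Fin d) ℂ) * (Aᴴ * A) * (Vu A : Matrix (Fin d) (Fin d) ℂ) := by
        noncomm_ring
    _ = _ := this

lemma Bm_col_sq (j : Fin d) : ∑ i, ‖Bm A i j‖^2 = mu A j := by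
  have h := congrFun (congrFun (Bm_conj_mul A) j) j
  rw [Matrix.mul_apply, Matrix.diagonal_apply_eq] at h
  have : ∀ i, (Bm A)ᴴ j i * Bm A i j = ((‖Bm A i j‖^2 : ℝ) : ℂ) := by
    intro i
    rw [Matrix.conjTranspose_apply]
    simp [Complex.star_def, mul_comm, Complex.mul_conj, Complex.normSq_eq_norm_sq]
  rw [Finset.sum_congr rfl (fun i _ => this i)] at h
  simp only [Function.comp_apply] at h
  have h2 : ((∑ i, ‖Bm A i j‖^2 : ℝ) : ℂ) = ((mu A j : ℝ) : ℂ) := by rw [Complex.ofReal_sum]; exact h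
  exact_mod_cast h2

lemma Bm_mul_star : Bm A * star (Vu A : Matrix (Fin d) (Fin d) ℂ) = A := by
  have hv : (Vu A : Matrix (Fin d) (Fin d) ℂ) * star (Vu A : Matrix (Fin d) (Fin d) ℂ) = 1 :=
    Matrix.mem_unitaryGroup_iff.mp (Vu A).2
  rw [Bm, mul_assoc, hv, mul_one]

lemma traceNorm_eq' : traceNorm A = ∑ j, Real.sqrt (mu A j) := traceNorm_eq A

lemma abs_trace_le : ‖Matrix.trace (X * A)‖ ≤ ‖X‖ * traceNorm A := by
  have hA : X * A = X * Bm A * star (Vu A : Matrix (Fin d) (Fin d) ℂ) := by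
    rw [mul_assoc, Bm_mul_star]
  rw [hA, Matrix.trace_mul_cycle, Matrix.trace]
  set W := star (Vu A : Matrix (Fin d) (Fin d) ℂ) * X with hW
  -- each diagonal entry as an inner product
  have key : ∀ j : Fin d, ‖(W * Bm A).diag j‖ ≤ ‖X‖ * Real.sqrt (mu A j) := by
    intro j
    set u : EuclideanSpace ℂ (Fin d) :=
      (EuclideanSpace.equiv (Fin d) ℂ).symm ((Wᴴ) *ᵥ Pi.single j 1) with hu
    set y : EuclideanSpace ℂ (Fin d) :=
      (EuclideanSpace.equiv (Fin d) ℂ).symm (fun i => Bm A i j) with hy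
    have hinner : (W * Bm A).diag j = (inner ℂ u y : ℂ) := by
      rw [Matrix.diag, Matrix.mul_apply, PiLp.inner_apply]
      refine Finset.sum_congr rfl fun i _ => ?_
      have hui : u i = Wᴴ i j := by
        simp [hu, Matrix.mulVec_single]
      rw [hui]
      have hyi : y i = Bm A i j := rfl
      rw [hyi, Matrix.conjTranspose_apply, RCLike.inner_apply, starRingEnd_apply, star_star]
      exact mul_comm _ _
    have hnu : ‖u‖ ≤ ‖X‖ := by
      have h1 : ‖u‖ ≤ ‖Wᴴ‖ * ‖(EuclideanSpace.single j (1:ℂ) : EuclideanSpace ℂ (Fin d))‖ :=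
        Matrix.l2_opNorm_mulVec (Wᴴ) (EuclideanSpace.single j (1:ℂ))
      rw [EuclideanSpace.norm_single, norm_one, mul_one] at h1
      refine h1.trans ?_
      rw [Matrix.l2_opNorm_conjTranspose, hW]
      calc ‖star (Vu A : Matrix (Fin d) (Fin d) ℂ) * X‖
          ≤ ‖star (Vu A : Matrix (Fin d) (Fin d) ℂ)‖ * ‖X‖ := Matrix.l2_opNorm_mul _ _
        _ ≤ 1 * ‖X‖ := by
            apply mul_le_mul_of_nonneg_right _ (norm_nonneg X)
            rw [Matrix.star_eq_conjTranspose, Matrix.l2_opNorm_conjTranspose]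
            exact norm_unitary _
        _ = ‖X‖ := one_mul _
    have hny : ‖y‖ = Real.sqrt (mu A j) := by
      rw [EuclideanSpace.norm_eq, ← Bm_col_sq A j]
      exact congrArg Real.sqrt (Finset.sum_congr rfl fun i _ => rfl)
    calc ‖(W * Bm A).diag j‖ = ‖(inner ℂ u y : ℂ)‖ := by rw [hinner]
      _ ≤ ‖u‖ * ‖y‖ := norm_inner_le_norm u y
      _ ≤ ‖X‖ * Real.sqrt (mu A j) := by
          rw [hny]
          exact mul_le_mul_of_nonneg_right hnu (Real.sqrt_nonneg _)
  calc ‖∑ j, (W * Bm A).diag j‖ ≤ ∑ j, ‖(W * Bm A).diag j‖ :=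
        norm_sum_le _ _
    _ ≤ ∑ j, ‖X‖ * Real.sqrt (mu A j) := Finset.sum_le_sum fun j _ => key j
    _ = ‖X‖ * traceNorm A := by rw [traceNorm_eq', Finset.mul_sum]

end dual

lemma exists_dual {d : ℕ} (A : Matrix (Fin d) (Fin d) ℂ) :
    ∃ U : Matrix (Fin d) (Fin d) ℂ, ‖U‖ ≤ 1 ∧ (Matrix.trace (U * A)).re = traceNorm A := by
  classical
  set c : Fin d → ℂ := fun j => ((Real.sqrt (mu A j) : ℝ) : ℂ) with hc
  set W : Matrix (Fin d) (Fin d) ℂ := Matrix.of (fun i j => Bm A i j * (c j)⁻¹) with hWdef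
  have hμ0 : ∀ j, 0 ≤ mu A j := fun j => (hH A).eigenvalues_nonneg j
  have hcstar : ∀ j, star ((c j)⁻¹) = (c j)⁻¹ := by
    intro j
    rw [star_inv₀, Complex.star_def, hc, Complex.conj_ofReal]
  have hWW : Wᴴ * W = Matrix.diagonal (fun j => ((mu A j : ℝ) : ℂ) * ((c j)⁻¹ * (c j)⁻¹)) := by
    ext j k
    have step : (Wᴴ * W) j k = (((Bm A)ᴴ * Bm A) j k) * ((c j)⁻¹ * (c k)⁻¹) := by
      rw [Matrix.mul_apply, Matrix.mul_apply, Finset.sum_mul]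
      refine Finset.sum_congr rfl fun i _ => ?_
      rw [Matrix.conjTranspose_apply, Matrix.conjTranspose_apply]
      show star (W i j) * W i k = _
      rw [hWdef]
      simp only [Matrix.of_apply]
      rw [star_mul', hcstar]
      ring
    rw [step, Bm_conj_mul]
    by_cases hjk : j = k
    · subst hjk
      simp only [Matrix.diagonal_apply_eq, Function.comp_apply]
      ring_nf
      exact mul_comm _ _
    · simp [Matrix.diagonal_apply_ne _ hjk, hjk]
  have hWnorm : ‖W‖ ≤ 1 := by
    have h2 := CStarRing.norm_star_mul_self (x := W)
    rw [Matrix.star_eq_conjTranspose, hWW] at h2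
    have h3 : ‖Matrix.diagonal (fun j => ((mu A j : ℝ) : ℂ) * ((c j)⁻¹ * (c j)⁻¹))‖ ≤ 1 := by
      apply norm_diagonal_le _ _ zero_le_one
      intro j
      by_cases hm : mu A j = 0
      · simp [hm]
      · have hcj : c j * c j = ((mu A j : ℝ) : ℂ) := by
          rw [hc, ← Complex.ofReal_mul, Real.mul_self_sqrt (hμ0 j)]
        have hcne : c j ≠ 0 := by
          simp only [hc, ne_eq, Complex.ofReal_eq_zero]
          exact Real.sqrt_ne_zero'.mpr (lt_of_le_of_ne (hμ0 j) (Ne.symm hm))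
        have : ((mu A j : ℝ) : ℂ) * ((c j)⁻¹ * (c j)⁻¹) = 1 := by
          rw [← hcj]; field_simp
        rw [this, norm_one]
    nlinarith [norm_nonneg W]
  refine ⟨(Vu A : Matrix (Fin d) (Fin d) ℂ) * Wᴴ, ?_, ?_⟩
  · calc ‖(Vu A : Matrix (Fin d) (Fin d) ℂ) * Wᴴ‖
        ≤ ‖(Vu A : Matrix (Fin d) (Fin d) ℂ)‖ * ‖Wᴴ‖ := Matrix.l2_opNorm_mul _ _
      _ ≤ 1 * 1 := by
          apply mul_le_mul (norm_unitary _) _ (norm_nonneg _) zero_le_one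
          rw [Matrix.l2_opNorm_conjTranspose]; exact hWnorm
      _ = 1 := one_mul 1
  · have htr : Matrix.trace ((Vu A : Matrix (Fin d) (Fin d) ℂ) * Wᴴ * A)
        = Matrix.trace (Wᴴ * Bm A) := by
      rw [mul_assoc, Matrix.trace_mul_comm, mul_assoc, Bm]
    rw [htr]
    have hstar : ∀ i j, star (Bm A i j) * Bm A i j = ((‖Bm A i j‖^2 : ℝ) : ℂ) := by
      intro i j
      simp [Complex.star_def, mul_comm, Complex.mul_conj, Complex.normSq_eq_norm_sq]
    have h4 : Matrix.trace (Wᴴ * Bm A) = ∑ j, ((mu A j : ℝ) : ℂ) * (c j)⁻¹ := by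
      rw [Matrix.trace]
      refine Finset.sum_congr rfl fun j _ => ?_
      rw [Matrix.diag]
      rw [Matrix.mul_apply]
      have hterm : ∀ i, Wᴴ j i * Bm A i j = ((‖Bm A i j‖^2 : ℝ) : ℂ) * (c j)⁻¹ := by
        intro i
        rw [Matrix.conjTranspose_apply]
        show star (W i j) * Bm A i j = _
        rw [hWdef]
        simp only [Matrix.of_apply]
        rw [star_mul', hcstar]
        rw [mul_assoc, mul_comm ((c j)⁻¹) (Bm A i j), ← mul_assoc, hstar i j]
      rw [Finset.sum_congr rfl fun i _ => hterm i, ← Finset.sum_mul, ← Complex.ofReal_sum,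
        Bm_col_sq]
    rw [h4, traceNorm_eq']
    have h5 : ∀ j, ((mu A j : ℝ) : ℂ) * (c j)⁻¹ = ((Real.sqrt (mu A j) : ℝ) : ℂ) := by
      intro j
      rw [hc]
      by_cases hm : mu A j = 0
      · simp [hm]
      · rw [← Complex.ofReal_inv, ← Complex.ofReal_mul]
        congr 1
        have hs : Real.sqrt (mu A j) * Real.sqrt (mu A j) = mu A j :=
          Real.mul_self_sqrt (hμ0 j)
        have hsne : Real.sqrt (mu A j) ≠ 0 :=
          Real.sqrt_ne_zero'.mpr (lt_of_le_of_ne (hμ0 j) (Ne.symm hm))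
        field_simp
        rw [Real.sq_sqrt (hμ0 j)]
    rw [Finset.sum_congr rfl fun j _ => h5 j, ← Complex.ofReal_sum, Complex.ofReal_re]

section cors
variable {d : ℕ}

lemma traceNorm_add_le (A B : Matrix (Fin d) (Fin d) ℂ) :
    traceNorm (A + B) ≤ traceNorm A + traceNorm B := by
  obtain ⟨U, hU, hre⟩ := exists_dual (A + B)
  rw [← hre, mul_add, Matrix.trace_add, Complex.add_re]
  have h1 : (Matrix.trace (U * A)).re ≤ traceNorm A := by
    refine (Complex.re_le_norm _).trans ((abs_trace_le A U).trans ?_)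
    calc ‖U‖ * traceNorm A ≤ 1 * traceNorm A :=
          mul_le_mul_of_nonneg_right hU (traceNorm_nonneg A)
      _ = traceNorm A := one_mul _
  have h2 : (Matrix.trace (U * B)).re ≤ traceNorm B := by
    refine (Complex.re_le_norm _).trans ((abs_trace_le B U).trans ?_)
    calc ‖U‖ * traceNorm B ≤ 1 * traceNorm B :=
          mul_le_mul_of_nonneg_right hU (traceNorm_nonneg B)
      _ = traceNorm B := one_mul _
  linarith

lemma traceNorm_mul_le_left (X A : Matrix (Fin d) (Fin d) ℂ) :
    traceNorm (X * A) ≤ ‖X‖ * traceNorm A := by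
  obtain ⟨U, hU, hre⟩ := exists_dual (X * A)
  rw [← hre, ← mul_assoc]
  refine (Complex.re_le_norm _).trans ((abs_trace_le A (U * X)).trans ?_)
  apply mul_le_mul_of_nonneg_right _ (traceNorm_nonneg A)
  calc ‖U * X‖ ≤ ‖U‖ * ‖X‖ := Matrix.l2_opNorm_mul _ _
    _ ≤ 1 * ‖X‖ := mul_le_mul_of_nonneg_right hU (norm_nonneg X)
    _ = ‖X‖ := one_mul _

lemma traceNorm_mul_le_right (A X : Matrix (Fin d) (Fin d) ℂ) :
    traceNorm (A * X) ≤ traceNorm A * ‖X‖ := by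
  obtain ⟨U, hU, hre⟩ := exists_dual (A * X)
  rw [← hre, ← mul_assoc, Matrix.trace_mul_cycle]
  refine (Complex.re_le_norm _).trans ((abs_trace_le A (X * U)).trans ?_)
  rw [mul_comm (traceNorm A) ‖X‖]
  apply mul_le_mul_of_nonneg_right _ (traceNorm_nonneg A)
  calc ‖X * U‖ ≤ ‖X‖ * ‖U‖ := Matrix.l2_opNorm_mul _ _
    _ ≤ ‖X‖ * 1 := mul_le_mul_of_nonneg_left hU (norm_nonneg X)
    _ = ‖X‖ := mul_one _

end cors


section kraus
variable {d k : ℕ}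

lemma complex_re_le_norm (z : ℂ) : z.re ≤ ‖z‖ := by
  exact Complex.re_le_norm z

set_option maxHeartbeats 1000000 in
open ContinuousLinearMap in
lemma norm_sum_conj_mul_le (M : Fin k → Matrix (Fin d) (Fin d) ℂ)
    (U : Matrix (Fin d) (Fin d) ℂ) :
    ‖∑ j, (M j)ᴴ * U * M j‖ ≤ ‖U‖ * ‖∑ j, (M j)ᴴ * M j‖ := by
  classical
  set φ := Matrix.toEuclideanCLM (n := Fin d) (𝕜 := ℂ) with hφ
  set s := ‖∑ j, (M j)ᴴ * M j‖ with hs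
  have hs0 : 0 ≤ s := norm_nonneg _
  have hadj : ∀ N : Matrix (Fin d) (Fin d) ℂ,
      φ (Nᴴ) = ContinuousLinearMap.adjoint (φ N) := by
    intro N
    rw [← ContinuousLinearMap.star_eq_adjoint, ← map_star, Matrix.star_eq_conjTranspose]
  have hsq : ∀ z : EuclideanSpace ℂ (Fin d), ‖z‖^2 = (inner ℂ z z : ℂ).re :=
    fun z => (inner_self_eq_norm_sq (𝕜 := ℂ) z).symm
  -- step 1
  have step1 : ∀ x : EuclideanSpace ℂ (Fin d), ∑ j, ‖φ (M j) x‖^2 ≤ s * ‖x‖^2 := by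
    intro x
    have e1 : ∑ j, ‖φ (M j) x‖^2 = (inner ℂ x (φ (∑ j, (M j)ᴴ * M j) x) : ℂ).re := by
      rw [map_sum, ContinuousLinearMap.sum_apply, inner_sum (𝕜 := ℂ), Complex.re_sum]
      refine Finset.sum_congr rfl fun j _ => ?_
      have hm : φ ((M j)ᴴ * M j) = φ ((M j)ᴴ) * φ (M j) := _root_.map_mul φ _ _
      rw [hm, ContinuousLinearMap.mul_apply, hadj, ContinuousLinearMap.adjoint_inner_right]
      exact (inner_self_eq_norm_sq (𝕜 := ℂ) _).symm
    rw [e1]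
    refine (complex_re_le_norm _).trans ?_
    refine (norm_inner_le_norm (𝕜 := ℂ) x _).trans ?_
    calc ‖x‖ * ‖φ (∑ j, (M j)ᴴ * M j) x‖ ≤ ‖x‖ * (s * ‖x‖) := by
          apply mul_le_mul_of_nonneg_left _ (norm_nonneg x)
          have := (φ (∑ j, (M j)ᴴ * M j)).le_opNorm x
          rwa [← Matrix.cstar_norm_def, ← hs] at this
      _ = s * ‖x‖^2 := by ring
  -- step 2
  have step2 : ∀ x y : EuclideanSpace ℂ (Fin d),
      ‖(inner ℂ x (φ (∑ j, (M j)ᴴ * U * M j) y) : ℂ)‖ ≤ ‖U‖ * s * (‖x‖ * ‖y‖) := by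
    intro x y
    have e2 : (inner ℂ x (φ (∑ j, (M j)ᴴ * U * M j) y) : ℂ)
        = ∑ j, (inner ℂ (φ (M j) x) (φ U (φ (M j) y)) : ℂ) := by
      rw [map_sum, ContinuousLinearMap.sum_apply, inner_sum (𝕜 := ℂ)]
      refine Finset.sum_congr rfl fun j _ => ?_
      have hm : φ ((M j)ᴴ * U * M j) = φ ((M j)ᴴ) * φ U * φ (M j) := by
        rw [_root_.map_mul, _root_.map_mul]
      rw [hm]
      simp only [ContinuousLinearMap.mul_apply]
      rw [hadj, ContinuousLinearMap.adjoint_inner_right]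
    rw [e2]
    calc ‖∑ j, (inner ℂ (φ (M j) x) (φ U (φ (M j) y)) : ℂ)‖
        ≤ ∑ j, ‖(inner ℂ (φ (M j) x) (φ U (φ (M j) y)) : ℂ)‖ := norm_sum_le _ _
      _ ≤ ∑ j, ‖φ (M j) x‖ * (‖U‖ * ‖φ (M j) y‖) := by
          refine Finset.sum_le_sum fun j _ => ?_
          refine (norm_inner_le_norm (𝕜 := ℂ) _ _).trans ?_
          apply mul_le_mul_of_nonneg_left _ (norm_nonneg _)
          have := (φ U).le_opNorm (φ (M j) y)
          rwa [← Matrix.cstar_norm_def] at this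
      _ = ‖U‖ * ∑ j, ‖φ (M j) x‖ * ‖φ (M j) y‖ := by
          rw [Finset.mul_sum]; exact Finset.sum_congr rfl fun j _ => by ring
      _ ≤ ‖U‖ * (Real.sqrt (∑ j, ‖φ (M j) x‖^2) * Real.sqrt (∑ j, ‖φ (M j) y‖^2)) := by
          apply mul_le_mul_of_nonneg_left _ (norm_nonneg U)
          exact Real.sum_mul_le_sqrt_mul_sqrt _ _ _
      _ ≤ ‖U‖ * (Real.sqrt (s * ‖x‖^2) * Real.sqrt (s * ‖y‖^2)) := by
          apply mul_le_mul_of_nonneg_left _ (norm_nonneg U)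
          exact mul_le_mul (Real.sqrt_le_sqrt (step1 x)) (Real.sqrt_le_sqrt (step1 y))
            (Real.sqrt_nonneg _) (Real.sqrt_nonneg _)
      _ = ‖U‖ * s * (‖x‖ * ‖y‖) := by
          rw [Real.sqrt_mul hs0, Real.sqrt_mul hs0, Real.sqrt_sq (norm_nonneg x),
            Real.sqrt_sq (norm_nonneg y)]
          rw [show (Real.sqrt s * ‖x‖) * (Real.sqrt s * ‖y‖)
              = (Real.sqrt s * Real.sqrt s) * (‖x‖ * ‖y‖) from by ring,
            Real.mul_self_sqrt hs0]
          ring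
  -- step 3
  rw [Matrix.cstar_norm_def]
  apply ContinuousLinearMap.opNorm_le_bound _ (mul_nonneg (norm_nonneg U) hs0)
  intro y
  set v : EuclideanSpace ℂ (Fin d) := φ (∑ j, (M j)ᴴ * U * M j) y with hv
  by_cases hz : ‖v‖ = 0
  · rw [hz]
    exact mul_nonneg (mul_nonneg (norm_nonneg U) hs0) (norm_nonneg y)
  · have h2 : ‖v‖^2 ≤ ‖U‖ * s * (‖v‖ * ‖y‖) := by
      rw [hsq v, hv]
      exact (complex_re_le_norm _).trans (step2 v y)
    have hpos : 0 < ‖v‖ := lt_of_le_of_ne (norm_nonneg _) (Ne.symm hz)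
    nlinarith [hpos]
end kraus

lemma traceNorm_kraus {d k : ℕ} (M : Fin k → Matrix (Fin d) (Fin d) ℂ)
    (X : Matrix (Fin d) (Fin d) ℂ) :
    traceNorm (∑ j, M j * X * (M j)ᴴ) ≤ ‖∑ j, (M j)ᴴ * M j‖ * traceNorm X := by
  obtain ⟨U, hU, hre⟩ := exists_dual (∑ j, M j * X * (M j)ᴴ)
  rw [← hre]
  have h1 : Matrix.trace (U * ∑ j, M j * X * (M j)ᴴ)
      = Matrix.trace ((∑ j, (M j)ᴴ * U * M j) * X) := by
    rw [Finset.mul_sum, Matrix.trace_sum, Finset.sum_mul, Matrix.trace_sum]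
    refine Finset.sum_congr rfl fun j _ => ?_
    have e : U * (M j * X * (M j)ᴴ) = (U * M j * X) * (M j)ᴴ := by
      simp only [mul_assoc]
    rw [e, Matrix.trace_mul_comm]
    congr 1
    simp only [mul_assoc]
  rw [h1]
  refine (complex_re_le_norm _).trans ?_
  have h2 : ‖Matrix.trace ((∑ j, (M j)ᴴ * U * M j) * X)‖
      ≤ ‖∑ j, (M j)ᴴ * U * M j‖ * traceNorm X := abs_trace_le X _
  refine le_trans le_rfl (h2.trans ?_)
  apply mul_le_mul_of_nonneg_right _ (traceNorm_nonneg X)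
  refine (norm_sum_conj_mul_le M U).trans ?_
  calc ‖U‖ * ‖∑ j, (M j)ᴴ * M j‖ ≤ 1 * ‖∑ j, (M j)ᴴ * M j‖ :=
        mul_le_mul_of_nonneg_right hU (norm_nonneg _)
    _ = _ := one_mul _

lemma scalar_bound {ν ε : ℝ} (h1 : |ν - 1| ≤ ε) (h2 : ε ≤ 1/2) :
    (Real.sqrt ν)⁻¹ ≤ 2 ∧ |(Real.sqrt ν)⁻¹ - 1| ≤ 2 * ε := by
  have hε0 : 0 ≤ ε := le_trans (abs_nonneg _) h1
  have hν : 1/2 ≤ ν := by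
    rcases abs_le.mp h1 with ⟨ha, hb⟩; linarith
  set s := Real.sqrt ν with hsdef
  have hs2 : s^2 = ν := Real.sq_sqrt (by linarith)
  have hs0 : 0 ≤ s := Real.sqrt_nonneg ν
  have hs7 : 0.7 ≤ s := by nlinarith
  have hinv2 : s⁻¹ ≤ 2 := by
    rw [inv_eq_one_div, div_le_iff₀ (by linarith)]; linarith
  refine ⟨hinv2, ?_⟩
  have hprod : (1 - s) * (1 + s) = 1 - ν := by nlinarith
  have habs : |1 - s| * (1 + s) = |1 - ν| := by
    rw [← abs_of_nonneg (show (0:ℝ) ≤ 1 + s by linarith), ← abs_mul, hprod]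
  have h1' : |1 - ν| ≤ ε := by rwa [abs_sub_comm] at h1
  have h5 : |1 - s| ≤ ε := by nlinarith [abs_nonneg (1 - s)]
  have heq : s⁻¹ - 1 = (1 - s) * s⁻¹ := by
    field_simp
  rw [heq, abs_mul, abs_inv, abs_of_nonneg hs0]
  calc |1 - s| * s⁻¹ ≤ ε * 2 := mul_le_mul h5 hinv2 (inv_nonneg.mpr hs0) hε0
    _ = 2 * ε := by ring

lemma T_props {d : ℕ} {S : Matrix (Fin d) (Fin d) ℂ} {ε : ℝ} (hS : S.PosSemidef)
    (h : ‖S - 1‖ ≤ ε) (hε : ε ≤ 1/2) :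
    (matSqrt S)⁻¹ᴴ = (matSqrt S)⁻¹ ∧ ‖(matSqrt S)⁻¹‖ ≤ 2 ∧ ‖(matSqrt S)⁻¹ - 1‖ ≤ 2*ε := by
  classical
  have hε0 : 0 ≤ ε := le_trans (norm_nonneg _) h
  set ν := hS.1.eigenvalues with hν
  set Vs := hS.1.eigenvectorUnitary with hVs
  have hνb : ∀ i, |ν i - 1| ≤ ε := fun i => eig_near hS.1 h i
  have hνhalf : ∀ i, 1/2 ≤ ν i := by
    intro i; rcases abs_le.mp (hνb i) with ⟨ha, hb⟩; linarith
  have hsb : ∀ i, (Real.sqrt (ν i))⁻¹ ≤ 2 ∧ |(Real.sqrt (ν i))⁻¹ - 1| ≤ 2 * ε :=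
    fun i => scalar_bound (hνb i) hε
  have hsne : ∀ i, (Real.sqrt (ν i) : ℂ) ≠ 0 := by
    intro i
    simp only [ne_eq, Complex.ofReal_eq_zero]
    have := hνhalf i
    exact Real.sqrt_ne_zero'.mpr (by linarith)
  set T : Matrix (Fin d) (Fin d) ℂ :=
    (Vs : Matrix (Fin d) (Fin d) ℂ) * Matrix.diagonal (fun i => ((Real.sqrt (ν i))⁻¹ : ℂ))
      * star (Vs : Matrix (Fin d) (Fin d) ℂ) with hT
  have hVV : star (Vs : Matrix (Fin d) (Fin d) ℂ) * (Vs : Matrix (Fin d) (Fin d) ℂ) = 1 :=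
    Unitary.coe_star_mul_self Vs
  have hVV' : (Vs : Matrix (Fin d) (Fin d) ℂ) * star (Vs : Matrix (Fin d) (Fin d) ℂ) = 1 :=
    Matrix.mem_unitaryGroup_iff.mp Vs.2
  have hsqrt : matSqrt S = (Vs : Matrix (Fin d) (Fin d) ℂ)
      * Matrix.diagonal (RCLike.ofReal ∘ Real.sqrt ∘ ν) * star (Vs : Matrix (Fin d) (Fin d) ℂ) := by
    rw [matSqrt_eq hS]
    rfl
  have hright : matSqrt S * T = 1 := by
    rw [hsqrt, hT]
    calc (Vs : Matrix (Fin d) (Fin d) ℂ) * Matrix.diagonal (RCLike.ofReal ∘ Real.sqrt ∘ ν)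
          * star (Vs : Matrix (Fin d) (Fin d) ℂ)
          * ((Vs : Matrix (Fin d) (Fin d) ℂ)
            * Matrix.diagonal (fun i => ((Real.sqrt (ν i))⁻¹ : ℂ))
            * star (Vs : Matrix (Fin d) (Fin d) ℂ))
        = (Vs : Matrix (Fin d) (Fin d) ℂ) * (Matrix.diagonal (RCLike.ofReal ∘ Real.sqrt ∘ ν)
            * (star (Vs : Matrix (Fin d) (Fin d) ℂ) * (Vs : Matrix (Fin d) (Fin d) ℂ))
            * Matrix.diagonal (fun i => ((Real.sqrt (ν i))⁻¹ : ℂ)))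
            * star (Vs : Matrix (Fin d) (Fin d) ℂ) := by
          simp only [mul_assoc]
      _ = (Vs : Matrix (Fin d) (Fin d) ℂ) * (Matrix.diagonal (RCLike.ofReal ∘ Real.sqrt ∘ ν)
            * Matrix.diagonal (fun i => ((Real.sqrt (ν i))⁻¹ : ℂ)))
            * star (Vs : Matrix (Fin d) (Fin d) ℂ) := by rw [hVV, mul_one]
      _ = (Vs : Matrix (Fin d) (Fin d) ℂ) * 1 * star (Vs : Matrix (Fin d) (Fin d) ℂ) := by
          have hd : (Matrix.diagonal (RCLike.ofReal ∘ Real.sqrt ∘ ν) *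
              Matrix.diagonal (fun i => ((Real.sqrt (ν i))⁻¹ : ℂ))) = 1 := by
            rw [Matrix.diagonal_mul_diagonal, ← Matrix.diagonal_one]
            exact congrArg Matrix.diagonal (funext fun i => mul_inv_cancel₀ (hsne i))
          rw [hd]
      _ = 1 := by rw [mul_one, hVV']
  have hTeq : (matSqrt S)⁻¹ = T := Matrix.inv_eq_right_inv hright
  rw [hTeq]
  refine ⟨?_, ?_, ?_⟩
  · rw [hT, ← Matrix.star_eq_conjTranspose]
    rw [StarMul.star_mul, StarMul.star_mul, star_star]
    rw [Matrix.star_eq_conjTranspose (Matrix.diagonal _), Matrix.diagonal_conjTranspose]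
    have : star (fun i => ((Real.sqrt (ν i))⁻¹ : ℂ)) = fun i => ((Real.sqrt (ν i))⁻¹ : ℂ) := by
      funext i
      simp only [Pi.star_apply]
      rw [← Complex.ofReal_inv, Complex.star_def, Complex.conj_ofReal]
    rw [this, mul_assoc]
  · rw [hT]
    calc ‖(Vs : Matrix (Fin d) (Fin d) ℂ) * Matrix.diagonal (fun i => ((Real.sqrt (ν i))⁻¹ : ℂ))
          * star (Vs : Matrix (Fin d) (Fin d) ℂ)‖
        ≤ ‖(Vs : Matrix (Fin d) (Fin d) ℂ) * Matrix.diagonal (fun i => ((Real.sqrt (ν i))⁻¹ : ℂ))‖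
          * ‖star (Vs : Matrix (Fin d) (Fin d) ℂ)‖ := Matrix.l2_opNorm_mul _ _
      _ ≤ ‖(Vs : Matrix (Fin d) (Fin d) ℂ)‖
            * ‖Matrix.diagonal (fun i => ((Real.sqrt (ν i))⁻¹ : ℂ))‖
          * ‖star (Vs : Matrix (Fin d) (Fin d) ℂ)‖ := by
          apply mul_le_mul_of_nonneg_right (Matrix.l2_opNorm_mul _ _) (norm_nonneg _)
      _ ≤ 1 * 2 * 1 := by
          have hstar : ‖star (Vs : Matrix (Fin d) (Fin d) ℂ)‖ ≤ 1 := by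
            rw [Matrix.star_eq_conjTranspose, Matrix.l2_opNorm_conjTranspose]
            exact norm_unitary _
          have hdiag : ‖Matrix.diagonal (fun i => ((Real.sqrt (ν i))⁻¹ : ℂ))‖ ≤ 2 := by
            apply norm_diagonal_le _ _ (by norm_num)
            intro i
            rw [← Complex.ofReal_inv, Complex.norm_real, Real.norm_eq_abs,
              abs_of_nonneg (inv_nonneg.mpr (Real.sqrt_nonneg _))]
            exact (hsb i).1
          have hV1 : ‖(Vs : Matrix (Fin d) (Fin d) ℂ)‖ ≤ 1 := norm_unitary _
          apply mul_le_mul _ hstar (norm_nonneg _) (by norm_num)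
          exact mul_le_mul hV1 hdiag (norm_nonneg _) (by norm_num)
      _ = 2 := by norm_num
  · have hone : (1 : Matrix (Fin d) (Fin d) ℂ)
        = (Vs : Matrix (Fin d) (Fin d) ℂ) * 1 * star (Vs : Matrix (Fin d) (Fin d) ℂ) := by
      rw [mul_one, hVV']
    have hsub : T - 1 = (Vs : Matrix (Fin d) (Fin d) ℂ)
        * Matrix.diagonal (fun i => (((Real.sqrt (ν i))⁻¹ - 1 : ℝ) : ℂ))
        * star (Vs : Matrix (Fin d) (Fin d) ℂ) := by
      rw [hT]
      nth_rewrite 1 [hone]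
      rw [← Matrix.sub_mul, ← Matrix.mul_sub, ← Matrix.diagonal_one]
      congr 2
      rw [Matrix.diagonal_sub]
      congr 1
      funext i
      push_cast
      ring
    rw [hsub]
    calc ‖(Vs : Matrix (Fin d) (Fin d) ℂ)
          * Matrix.diagonal (fun i => (((Real.sqrt (ν i))⁻¹ - 1 : ℝ) : ℂ))
          * star (Vs : Matrix (Fin d) (Fin d) ℂ)‖
        ≤ ‖(Vs : Matrix (Fin d) (Fin d) ℂ)
            * Matrix.diagonal (fun i => (((Real.sqrt (ν i))⁻¹ - 1 : ℝ) : ℂ))‖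
          * ‖star (Vs : Matrix (Fin d) (Fin d) ℂ)‖ := Matrix.l2_opNorm_mul _ _
      _ ≤ ‖(Vs : Matrix (Fin d) (Fin d) ℂ)‖
            * ‖Matrix.diagonal (fun i => (((Real.sqrt (ν i))⁻¹ - 1 : ℝ) : ℂ))‖
          * ‖star (Vs : Matrix (Fin d) (Fin d) ℂ)‖ := by
          apply mul_le_mul_of_nonneg_right (Matrix.l2_opNorm_mul _ _) (norm_nonneg _)
      _ ≤ 1 * (2*ε) * 1 := by
          have hstar : ‖star (Vs : Matrix (Fin d) (Fin d) ℂ)‖ ≤ 1 := by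
            rw [Matrix.star_eq_conjTranspose, Matrix.l2_opNorm_conjTranspose]
            exact norm_unitary _
          have hdiag : ‖Matrix.diagonal (fun i => (((Real.sqrt (ν i))⁻¹ - 1 : ℝ) : ℂ))‖ ≤ 2*ε := by
            apply norm_diagonal_le _ _ (by linarith)
            intro i
            rw [Complex.norm_real, Real.norm_eq_abs]
            exact (hsb i).2
          have hV1 : ‖(Vs : Matrix (Fin d) (Fin d) ℂ)‖ ≤ 1 := norm_unitary _
          apply mul_le_mul _ hstar (norm_nonneg _) (by positivity)
          exact mul_le_mul hV1 hdiag (norm_nonneg _) (by norm_num)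
      _ = 2*ε := by ring


/-- The trace-preserving normalization does not change the order of the scheme: there is an
absolute constant `C > 0` such that whenever `‖S − I‖ ≤ ε ≤ 1/2` with `S = Σⱼ MⱼᴴMⱼ`, the
normalized Kraus map differs from the original one by at most `C ε ‖ρ‖₁` in trace norm. -/
theorem stmt6 :
    ∃ C : ℝ, 0 < C ∧
      ∀ d : ℕ, 1 ≤ d → ∀ ε : ℝ, 0 < ε → ε ≤ 1/2 → ∀ m : ℕ,
        ∀ M : Fin (m+1) → Matrix (Fin d) (Fin d) ℂ,
          opNorm ((∑ j, (M j)ᴴ * M j) - 1) ≤ ε →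
            ∀ ρ : Matrix (Fin d) (Fin d) ℂ,
              traceNorm
                ((∑ j, (M j * (matSqrt (∑ i, (M i)ᴴ * M i))⁻¹) * ρ *
                    (M j * (matSqrt (∑ i, (M i)ᴴ * M i))⁻¹)ᴴ)
                  - ∑ j, M j * ρ * (M j)ᴴ)
              ≤ C * ε * traceNorm ρ := by
  classical
  refine ⟨9, by norm_num, ?_⟩
  intro d hd ε hε0 hε m M h ρ
  set S : Matrix (Fin d) (Fin d) ℂ := ∑ i, (M i)ᴴ * M i with hSdef
  have hS : S.PosSemidef := by
    rw [hSdef]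
    exact Finset.sum_induction _ _ (fun a b ha hb => ha.add hb) Matrix.PosSemidef.zero
      (fun j _ => Matrix.posSemidef_conjTranspose_mul_self (M j))
  have hnorm : ‖S - 1‖ ≤ ε := h
  obtain ⟨hTH, hT2, hTm⟩ := T_props hS hnorm hε
  set T : Matrix (Fin d) (Fin d) ℂ := (matSqrt S)⁻¹ with hT
  -- rewrite the difference as a Kraus sum
  have hkey : ((∑ j, (M j * T) * ρ * (M j * T)ᴴ) - ∑ j, M j * ρ * (M j)ᴴ)
      = ∑ j, M j * (T * ρ * T - ρ) * (M j)ᴴ := by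
    rw [← Finset.sum_sub_distrib]
    refine Finset.sum_congr rfl fun j _ => ?_
    rw [Matrix.conjTranspose_mul, hTH]
    rw [Matrix.mul_sub, Matrix.sub_mul]
    simp only [mul_assoc]
  rw [hkey]
  have hρ0 : 0 ≤ traceNorm ρ := traceNorm_nonneg ρ
  -- bound ‖S‖
  have hSn : ‖S‖ ≤ 3/2 := by
    have : S = (S - 1) + 1 := by abel
    rw [this]
    refine (norm_add_le _ _).trans ?_
    have := norm_one_le (d := d)
    linarith
  -- bound traceNorm (T * ρ * T - ρ)
  have hX : T * ρ * T - ρ = (T - 1) * (ρ * T) + ρ * (T - 1) := by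
    rw [Matrix.sub_mul, Matrix.mul_sub]
    simp only [mul_assoc, one_mul, mul_one]
    abel
  have hXbound : traceNorm (T * ρ * T - ρ) ≤ 6 * ε * traceNorm ρ := by
    rw [hX]
    refine (traceNorm_add_le _ _).trans ?_
    have h1 : traceNorm ((T - 1) * (ρ * T)) ≤ 2*ε * (traceNorm ρ * 2) := by
      refine (traceNorm_mul_le_left _ _).trans ?_
      have hρT : traceNorm (ρ * T) ≤ traceNorm ρ * 2 := by
        refine (traceNorm_mul_le_right _ _).trans ?_
        exact mul_le_mul_of_nonneg_left hT2 hρ0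
      calc ‖T - 1‖ * traceNorm (ρ * T) ≤ (2*ε) * (traceNorm ρ * 2) := by
            apply mul_le_mul hTm hρT (traceNorm_nonneg _) (by positivity)
        _ = 2*ε * (traceNorm ρ * 2) := rfl
    have h2 : traceNorm (ρ * (T - 1)) ≤ traceNorm ρ * (2*ε) := by
      refine (traceNorm_mul_le_right _ _).trans ?_
      exact mul_le_mul_of_nonneg_left hTm hρ0
    nlinarith [hρ0, hε0.le]
  calc traceNorm (∑ j, M j * (T * ρ * T - ρ) * (M j)ᴴ)
      ≤ ‖∑ j, (M j)ᴴ * M j‖ * traceNorm (T * ρ * T - ρ) := traceNorm_kraus M _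
    _ ≤ (3/2) * (6 * ε * traceNorm ρ) := by
        apply mul_le_mul _ hXbound (traceNorm_nonneg _) (by norm_num)
        rw [← hSdef]
        exact hSn
    _ = 9 * ε * traceNorm ρ := by ring
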